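/- Let k be a field and d ≥ 0. Consider the k-algebra homomorphism f_3 : k[a_1,…,a_d, c′, b_1,…,b_{d+1}] → C = k[a_1,…,a_d, c′, b_1,…,b_d, c″] sending a_i ↦ a_i, c′ ↦ c′, b_1 ↦ −c″b_1, b_i ↦ b_{i−1} − c″b_i for 1 < i ≤ d, and b_{d+1} ↦ b_d − c″. Then C, regarded as a module over k[a_1,…,a_d, c′, b_1,…,b_{d+1}] via f_3, is free with basis (1, c″, c″^2, …, c″^d). -/

import Mathlib

open MvPolynomial

/-- Variables of `A_{d+1} = k[a_1,…,a_{d+1}, b_1,…,b_{d+1}]`: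
`Sum.inl p` is `a_{p+1}`, `Sum.inr p` is `b_{p+1}`. -/
abbrev AVar (d : ℕ) : Type := Fin (d + 1) ⊕ Fin (d + 1)

/-- Variables of `k[a_1,…,a_d, c', b_1,…,b_{d+1}]`:
`Sum.inl p` is `a_{p+1}`, `Sum.inr (Sum.inl ())` is `c'`, `Sum.inr (Sum.inr p)` is `b_{p+1}`. -/
abbrev RVar (d : ℕ) : Type := Fin d ⊕ (Unit ⊕ Fin (d + 1))

/-- Variables of `C = k[a_1,…,a_d, c', b_1,…,b_d, c'']`:
`Sum.inl (Sum.inl p)` is `a_{p+1}`, `Sum.inl (Sum.inr ())` is `c'`,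
`Sum.inr (Sum.inl p)` is `b_{p+1}`, `Sum.inr (Sum.inr ())` is `c''`. -/
abbrev CVar (d : ℕ) : Type := (Fin d ⊕ Unit) ⊕ (Fin d ⊕ Unit)

/-- Variables of `B_d = k[a_1,…,a_d, b_1,…,b_d, c]`:
`Sum.inl (Sum.inl p)` is `a_{p+1}`, `Sum.inl (Sum.inr p)` is `b_{p+1}`, `Sum.inr ()` is `c`. -/
abbrev BVar (d : ℕ) : Type := (Fin d ⊕ Fin d) ⊕ Unit
/-- `b_m` in `C = k[a_1,…,a_d,c',b_1,…,b_d,c'']` with conventions `b_0 = 0`, `b_{d+1} = 1`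
(the latter so that `b_m - c''·b_{m+1}` gives `b_d - c''` for `m = d`). -/
noncomputable def bCm (k : Type) [Field k] (d : ℕ) (m : ℕ) : MvPolynomial (CVar d) k :=
  if h : 1 ≤ m ∧ m ≤ d then X (Sum.inr (Sum.inl (⟨m - 1, by omega⟩ : Fin d)))
  else if m = d + 1 then 1 else 0

/-- `f_3 : k[a_1,…,a_d,c',b_1,…,b_{d+1}] → C`, `a_i ↦ a_i`, `c' ↦ c'`,
`b_1 ↦ -c''b_1`, `b_i ↦ b_{i-1} - c''b_i` (`1 < i ≤ d`), `b_{d+1} ↦ b_d - c''`. -/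
noncomputable def f3 (k : Type) [Field k] (d : ℕ) :
    MvPolynomial (RVar d) k →ₐ[k] MvPolynomial (CVar d) k :=
  aeval (fun v => match v with
    | Sum.inl p => X (Sum.inl (Sum.inl p))
    | Sum.inr (Sum.inl ()) => X (Sum.inl (Sum.inr ()))
    | Sum.inr (Sum.inr q) => bCm k d q - X (Sum.inr (Sum.inr ())) * bCm k d ((q : ℕ) + 1))


namespace Statement6Aux



variable (k : Type) [Field k] (d : ℕ)

/-- `b_{m+1}` as an `RVar` polynomial, for `m ≤ d`; junk `0` otherwise. -/
noncomputable def bv (m : ℕ) : MvPolynomial (RVar d) k :=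
  if h : m < d + 1 then MvPolynomial.X (Sum.inr (Sum.inr (⟨m, h⟩ : Fin (d+1)))) else 0

/-- abbreviation for `c''`. -/
noncomputable def cX : MvPolynomial (CVar d) k := MvPolynomial.X (Sum.inr (Sum.inr ()))

/-- the monic polynomial `y^(d+1) + ∑ b_{q+1} y^q` killed by `y ↦ c''`. -/
noncomputable def ppoly : Polynomial (MvPolynomial (RVar d) k) :=
  Polynomial.X ^ (d+1) + ∑ q ∈ Finset.range (d+1), Polynomial.C (bv k d q) * Polynomial.X ^ q

/-- `v n` is the preimage of `b_{d+1-n}` (with `v 0 = 1`, `v (d+1) = ppoly`). -/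
noncomputable def v : ℕ → Polynomial (MvPolynomial (RVar d) k)
  | 0 => 1
  | n+1 => Polynomial.C (bv k d (d - n)) + Polynomial.X * v n

lemma sum_eq : ∑ q ∈ Finset.range (d+1), Polynomial.C (bv k d q) * Polynomial.X ^ q
    = ∑ q : Fin (d+1), Polynomial.C (bv k d (q : ℕ)) * Polynomial.X ^ (q : ℕ) :=
  (Fin.sum_univ_eq_sum_range _ _).symm

lemma ppoly_monic : (ppoly k d).Monic := by
  apply Polynomial.monic_X_pow_add
  rw [sum_eq]
  exact Polynomial.degree_sum_fin_lt _

lemma ppoly_natDegree : (ppoly k d).natDegree = d + 1 := by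
  have hdeg : (ppoly k d).degree = (d + 1 : ℕ) := by
    rw [ppoly, Polynomial.degree_add_eq_left_of_degree_lt, Polynomial.degree_X_pow]
    rw [Polynomial.degree_X_pow, sum_eq]
    exact Polynomial.degree_sum_fin_lt _
  exact Polynomial.natDegree_eq_of_degree_eq_some hdeg

lemma ppoly_eq_v : ∀ n, n ≤ d + 1 →
    ppoly k d = v k d n * Polynomial.X ^ (d + 1 - n)
      + ∑ q ∈ Finset.range (d + 1 - n), Polynomial.C (bv k d q) * Polynomial.X ^ q
  | 0, _ => by simp [v, ppoly]
  | n+1, hn => by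
    have hn' : n ≤ d := by omega
    have h1 : d + 1 - n = (d - n) + 1 := by omega
    have h2 : d + 1 - (n + 1) = d - n := by omega
    rw [ppoly_eq_v n (by omega), h1, h2, v]
    rw [Finset.sum_range_succ]
    ring

lemma v_succ_eq_ppoly : v k d (d + 1) = ppoly k d := by
  have := ppoly_eq_v k d (d+1) le_rfl
  simpa using this.symm

lemma f3_bv (m : ℕ) (hm : m < d + 1) :
    f3 k d (bv k d m) = bCm k d m - cX k d * bCm k d (m + 1) := by
  rw [bv, dif_pos hm]
  simp [f3, cX]

lemma eval₂_ppoly :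
    Polynomial.eval₂ (f3 k d).toRingHom (cX k d) (ppoly k d) = 0 := by
  rw [ppoly]
  rw [Polynomial.eval₂_add, Polynomial.eval₂_X_pow, Polynomial.eval₂_finset_sum]
  have : ∀ q ∈ Finset.range (d+1),
      Polynomial.eval₂ (f3 k d).toRingHom (cX k d) (Polynomial.C (bv k d q) * Polynomial.X ^ q)
        = bCm k d q * cX k d ^ q - bCm k d (q+1) * cX k d ^ (q+1) := by
    intro q hq
    rw [Finset.mem_range] at hq
    rw [Polynomial.eval₂_mul, Polynomial.eval₂_C, Polynomial.eval₂_X_pow]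
    show f3 k d (bv k d q) * _ = _
    rw [f3_bv k d q hq]
    ring
  rw [Finset.sum_congr rfl this, Finset.sum_range_sub' (fun q => bCm k d q * cX k d ^ q)]
  have h0 : bCm k d 0 = 0 := by simp [bCm]
  have h1 : bCm k d (d+1) = 1 := by
    rw [bCm, dif_neg (by omega), if_pos rfl]
  rw [h0, h1]
  ring

lemma eval₂_v : ∀ n, n ≤ d + 1 →
    Polynomial.eval₂ (f3 k d).toRingHom (cX k d) (v k d n) = bCm k d (d + 1 - n)
  | 0, _ => by
    rw [v, Polynomial.eval₂_one, Nat.sub_zero, bCm, dif_neg (by omega), if_pos rfl]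
  | n+1, hn => by
    have hn' : n ≤ d := by omega
    rw [v, Polynomial.eval₂_add, Polynomial.eval₂_C, Polynomial.eval₂_mul,
      Polynomial.eval₂_X, eval₂_v n (by omega)]
    show f3 k d (bv k d (d - n)) + _ = _
    rw [f3_bv k d (d - n) (by omega)]
    have h1 : d - n + 1 = d + 1 - n := by omega
    have h2 : d + 1 - (n + 1) = d - n := by omega
    rw [h1, h2]
    ring

end Statement6Aux

namespace Statement6Aux

variable (k : Type) [Field k] (d : ℕ)

/-- lift of `f3` along `y ↦ c''` to the adjoin-root ring. -/
noncomputable def Phi : AdjoinRoot (ppoly k d) →+* MvPolynomial (CVar d) k :=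
  AdjoinRoot.lift (f3 k d).toRingHom (cX k d) (eval₂_ppoly k d)

/-- the inverse map. -/
noncomputable def psi : MvPolynomial (CVar d) k →+* AdjoinRoot (ppoly k d) :=
  MvPolynomial.eval₂Hom ((AdjoinRoot.of (ppoly k d)).comp (MvPolynomial.C)) (fun w =>
    match w with
    | Sum.inl (Sum.inl q) => AdjoinRoot.of _ (X (Sum.inl q))
    | Sum.inl (Sum.inr ()) => AdjoinRoot.of _ (X (Sum.inr (Sum.inl ())))
    | Sum.inr (Sum.inl q) => AdjoinRoot.mk _ (v k d (d - (q : ℕ)))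
    | Sum.inr (Sum.inr ()) => AdjoinRoot.root _)


lemma psi_C (c : k) : psi k d (MvPolynomial.C c) = AdjoinRoot.of (ppoly k d) (MvPolynomial.C c) := by
  simp [psi]

lemma psi_a (q : Fin d) : psi k d (X (Sum.inl (Sum.inl q)))
    = AdjoinRoot.of (ppoly k d) (X (Sum.inl q)) := by
  simp [psi]

lemma psi_c' : psi k d (X (Sum.inl (Sum.inr ())))
    = AdjoinRoot.of (ppoly k d) (X (Sum.inr (Sum.inl ()))) := by
  simp [psi]

lemma psi_b (q : Fin d) : psi k d (X (Sum.inr (Sum.inl q)))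
    = AdjoinRoot.mk (ppoly k d) (v k d (d - (q : ℕ))) := by
  simp [psi]

lemma psi_cX : psi k d (cX k d) = AdjoinRoot.root (ppoly k d) := by
  simp [psi, cX]

lemma psi_bCm (m : ℕ) (hm : m ≤ d + 1) :
    psi k d (bCm k d m) = AdjoinRoot.mk (ppoly k d) (v k d (d + 1 - m)) := by
  rcases Nat.eq_or_lt_of_le hm with h | h
  · subst h
    rw [bCm, dif_neg (by omega), if_pos rfl, Nat.sub_self]
    rw [map_one, v, map_one]
  · rcases Nat.eq_zero_or_pos m with h0 | h0
    · subst h0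
      rw [bCm, dif_neg (by omega), if_neg (by omega), Nat.sub_zero, v_succ_eq_ppoly,
        AdjoinRoot.mk_self, map_zero]
    · have hm' : 1 ≤ m ∧ m ≤ d := ⟨h0, by omega⟩
      rw [bCm, dif_pos hm']
      rw [psi_b]
      congr 2
      simp only [Fin.val_mk]
      omega

lemma psi_f3 : (psi k d).comp (f3 k d).toRingHom = AdjoinRoot.of (ppoly k d) := by
  apply MvPolynomial.ringHom_ext
  · intro c
    simp only [RingHom.comp_apply, AlgHom.toRingHom_eq_coe, RingHom.coe_coe]
    rw [show (f3 k d) (MvPolynomial.C c) = MvPolynomial.C c from f3 k d |>.commutes c]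
    rw [psi_C]
  · intro w
    simp only [RingHom.comp_apply, AlgHom.toRingHom_eq_coe, RingHom.coe_coe]
    match w with
    | Sum.inl p =>
      rw [show f3 k d (X (Sum.inl p)) = X (Sum.inl (Sum.inl p)) by simp [f3]]
      rw [psi_a]
    | Sum.inr (Sum.inl ()) =>
      rw [show f3 k d (X (Sum.inr (Sum.inl ()))) = X (Sum.inl (Sum.inr ())) by simp [f3]]
      rw [psi_c']
    | Sum.inr (Sum.inr q) =>
      rw [show f3 k d (X (Sum.inr (Sum.inr q)))
          = bCm k d (q : ℕ) - cX k d * bCm k d ((q : ℕ) + 1) by simp [f3, cX]]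
      rw [map_sub, map_mul, psi_bCm k d (q : ℕ) (by omega),
        psi_bCm k d ((q : ℕ) + 1) (by omega)]
      have hq : (q : ℕ) ≤ d := by omega
      have h1 : d + 1 - (q : ℕ) = (d - (q : ℕ)) + 1 := by omega
      have h2 : d + 1 - ((q : ℕ) + 1) = d - (q : ℕ) := by omega
      rw [psi_cX, h1, h2, v, map_add, map_mul, AdjoinRoot.mk_C, AdjoinRoot.mk_X]
      have hb : bv k d (d - (d - (q : ℕ))) = X (Sum.inr (Sum.inr q)) := by
        rw [bv, dif_pos (by omega)]
        congr 1
        congr 1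
        congr 1
        apply Fin.ext
        simp only [Fin.val_mk]
        omega
      rw [hb]
      ring

lemma Phi_psi : (Phi k d).comp (psi k d) = RingHom.id _ := by
  apply MvPolynomial.ringHom_ext
  · intro c
    simp only [RingHom.comp_apply, RingHom.id_apply]
    rw [psi_C, Phi, AdjoinRoot.lift_of]
    exact (f3 k d).commutes c
  · intro w
    simp only [RingHom.comp_apply, RingHom.id_apply]
    match w with
    | Sum.inl (Sum.inl q) =>
      rw [psi_a, Phi, AdjoinRoot.lift_of]
      simp [f3]
    | Sum.inl (Sum.inr ()) =>
      rw [psi_c', Phi, AdjoinRoot.lift_of]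
      simp [f3]
    | Sum.inr (Sum.inl q) =>
      rw [psi_b, Phi, AdjoinRoot.lift_mk, eval₂_v k d _ (by omega)]
      have hq : (q : ℕ) < d := q.isLt
      rw [bCm, dif_pos (by omega)]
      congr 1
      congr 1
      congr 1
      apply Fin.ext
      simp only [Fin.val_mk]
      omega
    | Sum.inr (Sum.inr ()) =>
      have : X (Sum.inr (Sum.inr ())) = cX k d := rfl
      rw [this, psi_cX, Phi, AdjoinRoot.lift_root]

lemma psi_Phi : (psi k d).comp (Phi k d) = RingHom.id _ := by
  rw [← RingHom.cancel_right (AdjoinRoot.mk_surjective (g := ppoly k d))]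
  apply Polynomial.ringHom_ext
  · intro r
    simp only [RingHom.comp_apply, RingHom.id_apply]
    rw [show AdjoinRoot.mk (ppoly k d) (Polynomial.C r) = AdjoinRoot.of _ r from AdjoinRoot.mk_C r]
    rw [Phi, AdjoinRoot.lift_of]
    exact RingHom.congr_fun (psi_f3 k d) r
  · simp only [RingHom.comp_apply, RingHom.id_apply]
    rw [AdjoinRoot.mk_X, Phi, AdjoinRoot.lift_root, psi_cX]

/-- the ring equivalence `AdjoinRoot (ppoly k d) ≃+* C`. -/
noncomputable def E : AdjoinRoot (ppoly k d) ≃+* MvPolynomial (CVar d) k :=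
  RingEquiv.ofRingHom (Phi k d) (psi k d) (Phi_psi k d) (psi_Phi k d)

end Statement6Aux

namespace Statement6Aux

variable (k : Type) [Field k] (d : ℕ)

lemma E_apply (x : AdjoinRoot (ppoly k d)) : E k d x = Phi k d x := rfl

lemma pb_dim : (AdjoinRoot.powerBasis' (ppoly_monic k d)).dim = d + 1 := by
  rw [AdjoinRoot.powerBasis'_dim, ppoly_natDegree]

lemma bijective_sum :
    Function.Bijective (fun r : Fin (d + 1) → MvPolynomial (RVar d) k =>
      ∑ i : Fin (d + 1), AdjoinRoot.of (ppoly k d) (r i)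
        * AdjoinRoot.root (ppoly k d) ^ (i : ℕ)) := by
  have hfun : (fun r : Fin (d + 1) → MvPolynomial (RVar d) k =>
      ∑ i : Fin (d + 1), AdjoinRoot.of (ppoly k d) (r i)
        * AdjoinRoot.root (ppoly k d) ^ (i : ℕ))
      = fun r => ((AdjoinRoot.powerBasis' (ppoly_monic k d)).basis.reindex
          (finCongr (pb_dim k d))).equivFun.symm r := by
    funext r
    rw [Module.Basis.equivFun_symm_apply]
    apply Finset.sum_congr rfl
    intro i _
    rw [Module.Basis.reindex_apply, PowerBasis.basis_eq_pow, Algebra.smul_def,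
      AdjoinRoot.algebraMap_eq, AdjoinRoot.powerBasis'_gen]
    simp
  rw [hfun]
  exact (Module.Basis.equivFun _).symm.bijective

end Statement6Aux


/-- `C = k[a_1,…,a_d,c',b_1,…,b_d,c'']` is free as a module over
`k[a_1,…,a_d,c',b_1,…,b_{d+1}]` (acting through `f_3`) with basis `1, c'', …, c''^d`:
the map `(r_0,…,r_d) ↦ ∑ f_3(r_i)·c''^i` is bijective. -/
theorem statement6 (k : Type) [Field k] (d : ℕ) :
    Function.Bijective (fun r : Fin (d + 1) → MvPolynomial (RVar d) k =>
      ∑ i : Fin (d + 1), f3 k d (r i) * X (Sum.inr (Sum.inr ())) ^ (i : ℕ)) := by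

  open Statement6Aux in
  have key : (fun r : Fin (d + 1) → MvPolynomial (RVar d) k =>
        ∑ i : Fin (d + 1), f3 k d (r i) * X (Sum.inr (Sum.inr ())) ^ (i : ℕ))
      = (⇑(E k d)) ∘ (fun r : Fin (d + 1) → MvPolynomial (RVar d) k =>
        ∑ i : Fin (d + 1), AdjoinRoot.of (ppoly k d) (r i)
          * AdjoinRoot.root (ppoly k d) ^ (i : ℕ)) := by
    funext r
    simp only [Function.comp_apply, map_sum, map_mul, map_pow, E_apply]
    apply Finset.sum_congr rfl
    intro i _
    rw [Phi, AdjoinRoot.lift_of, AdjoinRoot.lift_root]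
    rfl
  rw [key]
  exact (Statement6Aux.E k d).bijective.comp (Statement6Aux.bijective_sum k d)
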